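/- Let Π ⊆ Ω ⊆ ℂ be path-connected open sets, h : Ω → ℂ \ {0} analytic, and s : Π → ℂ \ {0} analytic with s(z)^2 = h(z) on Π. Then s extends to an analytic function on all of Ω satisfying s(z)^2 = h(z) if and only if for every piecewise-smooth closed curve γ in Ω, (1/(2πi)) ∮_γ h'(z)/h(z) dz is an even integer. -/

import Mathlib

open Complex Set intervalIntegral

namespace SqrtExt

/-- The path integral `∫_γ h'/h`. -/
noncomputable def pint (h : ℂ → ℂ) (γ : ℝ → ℂ) : ℂ :=
  ∫ u in (0:ℝ)..1, (deriv h (γ u) / h (γ u)) * deriv γ u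

/-- A tame path in `Ω` from `a` to `b`: a `C¹` curve with values in `Ω`,
constant near `-∞..0` and `1..∞`. -/
def Tame (Ω : Set ℂ) (γ : ℝ → ℂ) (a b : ℂ) : Prop :=
  ContDiff ℝ 1 γ ∧ (∀ u, γ u ∈ Ω) ∧
    ∃ ε > (0:ℝ), (∀ u ≤ ε, γ u = a) ∧ (∀ u, 1 - ε ≤ u → γ u = b)

theorem Tame.zero {Ω γ a b} (h : Tame Ω γ a b) : γ 0 = a := by
  obtain ⟨-, -, ε, hε, h0, -⟩ := h; exact h0 0 hε.le

theorem Tame.one {Ω γ a b} (h : Tame Ω γ a b) : γ 1 = b := by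
  obtain ⟨-, -, ε, hε, -, h1⟩ := h; exact h1 1 (by linarith)

theorem Tame.mono {Ω Ω' : Set ℂ} {γ a b} (hΩ : Ω ⊆ Ω') (h : Tame Ω γ a b) :
    Tame Ω' γ a b :=
  ⟨h.1, fun u => hΩ (h.2.1 u), h.2.2⟩

/-- Key ODE-style lemma: if `φ' = g·φ` on `[0,1]` then `φ 1 = φ 0 · exp(∫ g)`. -/
theorem keyODE {U : Set ℝ} (hU : IsOpen U) (hsub : Icc (0:ℝ) 1 ⊆ U)
    {g φ : ℝ → ℂ} (hg : ContinuousOn g U)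
    (hφ : ∀ t ∈ Icc (0:ℝ) 1, HasDerivAt φ (g t * φ t) t) :
    φ 1 = φ 0 * Complex.exp (∫ u in (0:ℝ)..1, g u) := by
  set K : ℝ → ℂ := fun t => ∫ u in (0:ℝ)..t, g u with hK
  have hKd : ∀ t ∈ Icc (0:ℝ) 1, HasDerivAt K (g t) t := by
    intro t ht
    refine integral_hasDerivAt_right ?_ ?_ (hg.continuousAt (hU.mem_nhds (hsub ht)))
    · refine ContinuousOn.intervalIntegrable (hg.mono ?_)
      rw [uIcc_of_le ht.1]
      exact fun u hu => hsub ⟨hu.1, hu.2.trans ht.2⟩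
    · exact hg.stronglyMeasurableAtFilter hU t (hsub ht)
  have hF : ∀ t ∈ Set.uIcc (0:ℝ) 1,
      HasDerivAt (fun t => φ t * Complex.exp (-K t)) ((fun _ => (0:ℂ)) t) t := by
    intro t ht
    rw [Set.uIcc_of_le zero_le_one] at ht
    have h1 := (hφ t ht).fun_mul (((hKd t ht).fun_neg).cexp)
    refine h1.congr_deriv ?_
    show _ = (0:ℂ)
    ring
  have := intervalIntegral.integral_eq_sub_of_hasDerivAt hF
    (intervalIntegrable_const)
  rw [intervalIntegral.integral_zero] at this
  have h0 : K 0 = 0 := intervalIntegral.integral_same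
  have heq : φ 1 * Complex.exp (-K 1) = φ 0 := by
    rw [h0] at this
    simpa using sub_eq_zero.mp this.symm
  calc φ 1 = φ 1 * Complex.exp (-K 1) * Complex.exp (K 1) := by
        rw [mul_assoc, ← Complex.exp_add]; simp
    _ = φ 0 * Complex.exp (K 1) := by rw [heq]

end SqrtExt

open Complex Set intervalIntegral

namespace SqrtExt2

/-- Smoothed segment path from `x` to `y`. -/
noncomputable def seg (x y : ℂ) (u : ℝ) : ℂ :=
  x + (Real.smoothTransition (3 * u - 1)) • (y - x)

theorem seg_contDiff (x y : ℂ) : ContDiff ℝ 1 (seg x y) := by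
  refine contDiff_const.add (ContDiff.fun_smul ?_ contDiff_const)
  exact Real.smoothTransition.contDiff.comp (by fun_prop)

theorem seg_mem (x y : ℂ) (u : ℝ) : seg x y u ∈ segment ℝ x y := by
  rw [segment_eq_image']
  exact ⟨Real.smoothTransition (3 * u - 1),
    ⟨Real.smoothTransition.nonneg _, Real.smoothTransition.le_one _⟩, rfl⟩

theorem seg_left (x y : ℂ) {u : ℝ} (hu : u ≤ 1/3) : seg x y u = x := by
  rw [seg, Real.smoothTransition.zero_of_nonpos (by linarith)]; simp

theorem seg_right (x y : ℂ) {u : ℝ} (hu : 1 - 1/3 ≤ u) : seg x y u = y := by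
  rw [seg, Real.smoothTransition.one_of_one_le (by linarith)]; simp

theorem seg_tame {Ω : Set ℂ} {x y : ℂ} (hseg : segment ℝ x y ⊆ Ω) :
    SqrtExt.Tame Ω (seg x y) x y :=
  ⟨seg_contDiff x y, fun u => hseg (seg_mem x y u),
    1/3, by norm_num, fun u hu => seg_left x y hu, fun u hu => seg_right x y hu⟩

/-- Concatenation of paths. -/
noncomputable def cc (γ₁ γ₂ : ℝ → ℂ) (u : ℝ) : ℂ :=
  if u ≤ 1/2 then γ₁ (2 * u) else γ₂ (2 * u - 1)

end SqrtExt2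

namespace SqrtExt3
open SqrtExt SqrtExt2

theorem cc_eventually_const {γ₁ γ₂ : ℝ → ℂ} {Ω a m b}
    (h₁ : Tame Ω γ₁ a m) (h₂ : Tame Ω γ₂ m b) :
    ∀ᶠ v in nhds (1/2 : ℝ), cc γ₁ γ₂ v = m := by
  obtain ⟨-, -, ε₁, hε₁, h₁0, h₁1⟩ := h₁
  obtain ⟨-, -, ε₂, hε₂, h₂0, h₂1⟩ := h₂
  have : Set.Ioo (1/2 - ε₁/2) (1/2 + ε₂/2) ∈ nhds (1/2 : ℝ) :=
    Ioo_mem_nhds (by linarith) (by linarith)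
  filter_upwards [this] with v hv
  rcases le_or_gt v (1/2) with h | h
  · rw [cc, if_pos h]; exact h₁1 _ (by cases hv; linarith)
  · rw [cc, if_neg (not_le.mpr h)]; exact h₂0 _ (by cases hv; linarith)

theorem cc_contDiff {γ₁ γ₂ : ℝ → ℂ} {Ω a m b}
    (h₁ : Tame Ω γ₁ a m) (h₂ : Tame Ω γ₂ m b) :
    ContDiff ℝ 1 (cc γ₁ γ₂) := by
  rw [contDiff_iff_contDiffAt]
  intro u
  rcases lt_trichotomy u (1/2 : ℝ) with h | h | h
  · have : ∀ᶠ v in nhds u, cc γ₁ γ₂ v = γ₁ (2 * v) := by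
      filter_upwards [Iio_mem_nhds h] with v hv
      rw [cc, if_pos (le_of_lt hv)]
    exact ((h₁.1.comp (by fun_prop)).contDiffAt).congr_of_eventuallyEq this
  · subst h
    exact contDiffAt_const.congr_of_eventuallyEq (cc_eventually_const h₁ h₂)
  · have : ∀ᶠ v in nhds u, cc γ₁ γ₂ v = γ₂ (2 * v - 1) := by
      filter_upwards [Ioi_mem_nhds h] with v hv
      rw [cc, if_neg (not_le.mpr hv)]
    exact ((h₂.1.comp (by fun_prop)).contDiffAt).congr_of_eventuallyEq this

theorem cc_tame {γ₁ γ₂ : ℝ → ℂ} {Ω a m b}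
    (h₁ : Tame Ω γ₁ a m) (h₂ : Tame Ω γ₂ m b) :
    Tame Ω (cc γ₁ γ₂) a b := by
  refine ⟨cc_contDiff h₁ h₂, ?_, ?_⟩
  · intro u
    rw [cc]
    split_ifs
    · exact h₁.2.1 _
    · exact h₂.2.1 _
  · obtain ⟨-, -, ε₁, hε₁, h₁0, h₁1⟩ := h₁
    obtain ⟨-, -, ε₂, hε₂, h₂0, h₂1⟩ := h₂
    refine ⟨min (min (ε₁/2) (ε₂/2)) (1/4), by positivity, ?_, ?_⟩
    · intro u hu
      have hu1 : u ≤ ε₁/2 := hu.trans ((min_le_left _ _).trans (min_le_left _ _))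
      have hu2 : u ≤ 1/4 := hu.trans (min_le_right _ _)
      rw [cc, if_pos (by linarith)]
      exact h₁0 _ (by linarith)
    · intro u hu
      have h1 : min (min (ε₁/2) (ε₂/2)) (1/4) ≤ ε₂/2 :=
        (min_le_left _ _).trans (min_le_right _ _)
      have h2 : min (min (ε₁/2) (ε₂/2)) (1/4) ≤ 1/4 := min_le_right _ _
      rw [cc, if_neg (by push_neg; linarith)]
      exact h₂1 _ (by linarith)

/-- Derivative of first half of concatenation. -/
theorem cc_deriv_left {γ₁ γ₂ : ℝ → ℂ} {Ω a m b}
    (h₁ : Tame Ω γ₁ a m) (h₂ : Tame Ω γ₂ m b) {u : ℝ} (hu : u ≤ 1/2) :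
    deriv (cc γ₁ γ₂) u = 2 * deriv γ₁ (2 * u) := by
  rcases lt_or_eq_of_le hu with h | h
  · have hev : ∀ᶠ v in nhds u, cc γ₁ γ₂ v = γ₁ (2 * v) := by
      filter_upwards [Iio_mem_nhds h] with v hv
      rw [cc, if_pos (le_of_lt hv)]
    rw [Filter.EventuallyEq.deriv_eq hev]
    have hd : HasDerivAt (fun v => γ₁ (2 * v)) ((2:ℝ) • deriv γ₁ (2 * u)) u := by
      have hγ : HasDerivAt γ₁ (deriv γ₁ (2 * u)) (2 * u) :=
        ((h₁.1.differentiable one_ne_zero) (2*u)).hasDerivAt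
      have hin : HasDerivAt (fun v : ℝ => 2 * v) 2 u := by
        simpa using (hasDerivAt_id u).const_mul (2:ℝ)
      simpa [Function.comp_def] using HasDerivAt.scomp_of_eq (x := u) (hg := hγ) (hh := hin) (hy := by simp)
    rw [hd.deriv, Complex.real_smul]; norm_num
  · subst h
    obtain ⟨ε₁, hε₁, -, h₁1⟩ := h₁.2.2
    have e1 : deriv (cc γ₁ γ₂) (1/2 : ℝ) = 0 := by
      rw [Filter.EventuallyEq.deriv_eq (cc_eventually_const h₁ h₂)]
      exact deriv_const _ _
    have e2 : deriv γ₁ (2 * (1/2 : ℝ)) = 0 := by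
      have hev : ∀ᶠ v in nhds (2 * (1/2 : ℝ)), γ₁ v = m := by
        have hlt : 1 - ε₁ < 2 * (1/2:ℝ) := by norm_num; linarith
        filter_upwards [Ioi_mem_nhds hlt] with v hv
        exact h₁1 v (le_of_lt hv)
      rw [Filter.EventuallyEq.deriv_eq hev]
      exact deriv_const _ _
    rw [e1, e2, mul_zero]

theorem cc_deriv_right {γ₁ γ₂ : ℝ → ℂ} {Ω a m b}
    (h₁ : Tame Ω γ₁ a m) (h₂ : Tame Ω γ₂ m b) {u : ℝ} (hu : 1/2 ≤ u) :
    deriv (cc γ₁ γ₂) u = 2 * deriv γ₂ (2 * u - 1) := by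
  rcases lt_or_eq_of_le hu with h | h
  · have hev : ∀ᶠ v in nhds u, cc γ₁ γ₂ v = γ₂ (2 * v - 1) := by
      filter_upwards [Ioi_mem_nhds h] with v hv
      rw [cc, if_neg (not_le.mpr hv)]
    rw [Filter.EventuallyEq.deriv_eq hev]
    have hd : HasDerivAt (fun v => γ₂ (2 * v - 1)) ((2:ℝ) • deriv γ₂ (2 * u - 1)) u := by
      have hγ : HasDerivAt γ₂ (deriv γ₂ (2 * u - 1)) (2 * u - 1) :=
        ((h₂.1.differentiable one_ne_zero) (2*u - 1)).hasDerivAt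
      have hin : HasDerivAt (fun v : ℝ => 2 * v - 1) 2 u := by
        simpa using ((hasDerivAt_id u).const_mul (2:ℝ)).sub_const 1
      simpa [Function.comp_def] using HasDerivAt.scomp_of_eq (x := u) (hg := hγ) (hh := hin) (hy := by simp)
    rw [hd.deriv, Complex.real_smul]; norm_num
  · have h' := h.symm; subst h'
    obtain ⟨ε₂, hε₂, h₂0, -⟩ := h₂.2.2
    have e1 : deriv (cc γ₁ γ₂) (1/2 : ℝ) = 0 := by
      rw [Filter.EventuallyEq.deriv_eq (cc_eventually_const h₁ h₂)]
      exact deriv_const _ _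
    have e2 : deriv γ₂ (2 * (1/2 : ℝ) - 1) = 0 := by
      have hev : ∀ᶠ v in nhds (2 * (1/2 : ℝ) - 1), γ₂ v = m := by
        have hlt : 2 * (1/2:ℝ) - 1 < ε₂ := by norm_num; linarith
        filter_upwards [Iio_mem_nhds hlt] with v hv
        exact h₂0 v (le_of_lt hv)
      rw [Filter.EventuallyEq.deriv_eq hev]
      exact deriv_const _ _
    rw [e1, e2, mul_zero]

end SqrtExt3

namespace SqrtExt4
open SqrtExt SqrtExt2 SqrtExt3

theorem integrand_continuous {Ω : Set ℂ} (hΩo : IsOpen Ω) {f : ℂ → ℂ}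
    (hf : ContinuousOn f Ω) {γ : ℝ → ℂ} {a b : ℂ} (hγ : Tame Ω γ a b) :
    Continuous fun u => f (γ u) * deriv γ u := by
  have hγc : Continuous γ := hγ.1.continuous
  have hdc : Continuous (deriv γ) := hγ.1.continuous_deriv le_rfl
  refine Continuous.mul ?_ hdc
  rw [continuous_iff_continuousAt]
  intro u
  exact (hf.continuousAt (hΩo.mem_nhds (hγ.2.1 u))).comp hγc.continuousAt

/-- `pint` is additive under concatenation. -/
theorem pint_cc {Ω : Set ℂ} (hΩo : IsOpen Ω) {h : ℂ → ℂ}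
    (hf : ContinuousOn (fun z => deriv h z / h z) Ω)
    {γ₁ γ₂ : ℝ → ℂ} {a m b : ℂ} (h₁ : Tame Ω γ₁ a m) (h₂ : Tame Ω γ₂ m b) :
    pint h (cc γ₁ γ₂) = pint h γ₁ + pint h γ₂ := by
  set f : ℂ → ℂ := fun z => deriv h z / h z with hfdef
  set F : ℝ → ℂ := fun u => f (cc γ₁ γ₂ u) * deriv (cc γ₁ γ₂) u with hFdef
  have hFc : Continuous F := integrand_continuous hΩo hf (cc_tame h₁ h₂)
  have hsplit : pint h (cc γ₁ γ₂)
      = (∫ u in (0:ℝ)..(1/2:ℝ), F u) + ∫ u in (1/2:ℝ)..(1:ℝ), F u :=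
    (intervalIntegral.integral_add_adjacent_intervals
      (hFc.intervalIntegrable _ _) (hFc.intervalIntegrable _ _)).symm
  have hpart1 : (∫ u in (0:ℝ)..(1/2:ℝ), F u) = pint h γ₁ := by
    have hcongr : (∫ u in (0:ℝ)..(1/2:ℝ), F u)
        = ∫ u in (0:ℝ)..(1/2:ℝ), (fun w => f (γ₁ w) * deriv γ₁ w * 2) (2 * u) := by
      refine intervalIntegral.integral_congr ?_
      intro u hu
      rw [Set.uIcc_of_le (by norm_num : (0:ℝ) ≤ 1/2)] at hu
      have hle : u ≤ 1/2 := hu.2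
      simp only [hFdef, cc, if_pos hle, cc_deriv_left h₁ h₂ hle]
      ring
    rw [hcongr, intervalIntegral.integral_comp_mul_left
      (f := fun w => f (γ₁ w) * deriv γ₁ w * 2) (c := 2) two_ne_zero]
    norm_num
    rw [pint]; ring
  have hpart2 : (∫ u in (1/2:ℝ)..(1:ℝ), F u) = pint h γ₂ := by
    have hcongr : (∫ u in (1/2:ℝ)..(1:ℝ), F u)
        = ∫ u in (1/2:ℝ)..(1:ℝ), (fun w => f (γ₂ (w - 1)) * deriv γ₂ (w - 1) * 2) (2 * u) := by
      refine intervalIntegral.integral_congr ?_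
      intro u hu
      rw [Set.uIcc_of_le (by norm_num : (1/2:ℝ) ≤ 1)] at hu
      have hge : 1/2 ≤ u := hu.1
      have hval : cc γ₁ γ₂ u = γ₂ (2 * u - 1) := by
        rcases lt_or_eq_of_le hge with hlt | heq
        · rw [cc, if_neg (not_le.mpr hlt)]
        · rw [← heq]
          have e1 : cc γ₁ γ₂ (1/2:ℝ) = γ₁ 1 := by rw [cc, if_pos le_rfl]; norm_num
          have e2 : (2 * (1/2:ℝ) - 1) = 0 := by norm_num
          rw [e1, e2, h₁.one, h₂.zero]
      simp only [hFdef, hval, cc_deriv_right h₁ h₂ hge]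
      ring_nf
    rw [hcongr, intervalIntegral.integral_comp_mul_left
      (f := fun w => f (γ₂ (w - 1)) * deriv γ₂ (w - 1) * 2) (c := 2) two_ne_zero]
    norm_num
    have hsub := intervalIntegral.integral_comp_sub_right (a := (1:ℝ)) (b := (2:ℝ))
      (fun w => f (γ₂ w) * deriv γ₂ w) 1
    norm_num at hsub
    rw [hsub, pint]; ring
  rw [hsplit, hpart1, hpart2]

/-- Reversal. -/
theorem rev_tame {Ω : Set ℂ} {γ : ℝ → ℂ} {a b : ℂ} (hγ : Tame Ω γ a b) :
    Tame Ω (fun u => γ (1 - u)) b a := by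
  obtain ⟨hc, hmem, ε, hε, h0, h1⟩ := hγ
  refine ⟨hc.comp (by fun_prop), fun u => hmem _, ε, hε, ?_, ?_⟩
  · intro u hu; exact h1 _ (by linarith)
  · intro u hu; exact h0 _ (by linarith)

theorem pint_rev {Ω : Set ℂ} (hΩo : IsOpen Ω) {h : ℂ → ℂ}
    (hf : ContinuousOn (fun z => deriv h z / h z) Ω)
    {γ : ℝ → ℂ} {a b : ℂ} (hγ : Tame Ω γ a b) :
    pint h (fun u => γ (1 - u)) = - pint h γ := by
  set f : ℂ → ℂ := fun z => deriv h z / h z with hfdef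
  have hd : ∀ u : ℝ, deriv (fun v => γ (1 - v)) u = (-1:ℝ) • deriv γ (1 - u) := by
    intro u
    have hγd : HasDerivAt γ (deriv γ (1 - u)) (1 - u) :=
      ((hγ.1.differentiable one_ne_zero) (1 - u)).hasDerivAt
    have hin : HasDerivAt (fun v : ℝ => 1 - v) (-1) u := by
      simpa using (hasDerivAt_const u (1:ℝ)).fun_sub (hasDerivAt_id u)
    have := HasDerivAt.scomp_of_eq (x := u) (hg := hγd) (hh := hin) (hy := by simp)
    simpa [Function.comp_def] using this.deriv
  have hcongr : pint h (fun u => γ (1 - u))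
      = ∫ u in (0:ℝ)..(1:ℝ), -((fun w => f (γ w) * deriv γ w) (1 - u)) := by
    refine intervalIntegral.integral_congr ?_
    intro u _
    simp only [hd u]
    rw [neg_smul, one_smul]
    ring
  rw [hcongr, intervalIntegral.integral_neg,
    intervalIntegral.integral_comp_sub_left (fun w => f (γ w) * deriv γ w) 1]
  norm_num [pint]
  rfl

/-- Constant paths are tame. -/
theorem const_tame {Ω : Set ℂ} {a : ℂ} (ha : a ∈ Ω) : Tame Ω (fun _ => a) a a :=
  ⟨contDiff_const, fun _ => ha, 1, one_pos, fun _ _ => rfl, fun _ _ => rfl⟩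

/-- Existence of tame paths in open path-connected sets. -/
theorem tame_exists {U : Set ℂ} (hUo : IsOpen U) (hUc : IsPathConnected U)
    {a b : ℂ} (ha : a ∈ U) (hb : b ∈ U) : ∃ γ, Tame U γ a b := by
  set A : Set ℂ := {z | z ∈ U ∧ ∃ γ, Tame U γ a z} with hA
  set B : Set ℂ := {z | z ∈ U ∧ ¬∃ γ, Tame U γ a z} with hB
  have hstep : ∀ z ∈ U, ∀ ε > (0:ℝ), Metric.ball z ε ⊆ U →
      ∀ w ∈ Metric.ball z ε, (∃ γ, Tame U γ a z) → ∃ γ, Tame U γ a w := by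
    intro z hz ε hε hball w hw ⟨γ, hγ⟩
    have hseg : segment ℝ z w ⊆ U :=
      fun p hp => hball ((convex_ball z ε).segment_subset (Metric.mem_ball_self hε) hw hp)
    exact ⟨cc γ (seg z w), cc_tame hγ (seg_tame hseg)⟩
  have hAo : IsOpen A := by
    rw [Metric.isOpen_iff]
    rintro z ⟨hz, hγ⟩
    obtain ⟨ε, hε, hball⟩ := Metric.isOpen_iff.mp hUo z hz
    exact ⟨ε, hε, fun w hw => ⟨hball hw, hstep z hz ε hε hball w hw hγ⟩⟩
  have hBo : IsOpen B := by
    rw [Metric.isOpen_iff]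
    rintro z ⟨hz, hnγ⟩
    obtain ⟨ε, hε, hball⟩ := Metric.isOpen_iff.mp hUo z hz
    refine ⟨ε, hε, fun w hw => ⟨hball hw, fun hγw => hnγ ?_⟩⟩
    -- from path to w, get path to z via segment back
    have hseg : segment ℝ w z ⊆ U := fun p hp =>
      hball ((convex_ball z ε).segment_subset hw (Metric.mem_ball_self hε) hp)
    obtain ⟨γ, hγ⟩ := hγw
    exact ⟨cc γ (seg w z), cc_tame hγ (seg_tame hseg)⟩
  by_contra hnb
  have hbB : b ∈ B := ⟨hb, hnb⟩
  have hP : IsPreconnected U := hUc.isConnected.isPreconnected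
  have hsub : U ⊆ A ∪ B := by
    intro z hz
    by_cases hzg : ∃ γ, Tame U γ a z
    · exact Or.inl ⟨hz, hzg⟩
    · exact Or.inr ⟨hz, hzg⟩
  have hAne : (U ∩ A).Nonempty := ⟨a, ha, ha, ⟨_, const_tame ha⟩⟩
  have hBne : (U ∩ B).Nonempty := ⟨b, hb, hbB⟩
  obtain ⟨z, -, hzA, hzB⟩ := hP A B hAo hBo hsub hAne hBne
  exact hzB.2 hzA.2

end SqrtExt4

namespace SqrtExt5
open SqrtExt SqrtExt2 SqrtExt3 SqrtExt4

theorem logderiv_contOn {Ω : Set ℂ} (hΩo : IsOpen Ω) {h : ℂ → ℂ}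
    (hh : DifferentiableOn ℂ h Ω) (hne : ∀ z ∈ Ω, h z ≠ 0) :
    ContinuousOn (fun z => deriv h z / h z) Ω :=
  ((hh.analyticOnNhd hΩo).deriv.continuousOn).div hh.continuousOn hne

/-- Monodromy along a tame path: `h(b) = h(a)·exp(∫_γ h'/h)`. -/
theorem exp_pint {Ω : Set ℂ} (hΩo : IsOpen Ω) {h : ℂ → ℂ}
    (hh : DifferentiableOn ℂ h Ω) (hne : ∀ z ∈ Ω, h z ≠ 0)
    {γ : ℝ → ℂ} {a b : ℂ} (hγ : Tame Ω γ a b) :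
    h b = h a * Complex.exp (pint h γ) := by
  have hkey := keyODE (U := Set.univ) isOpen_univ (Set.subset_univ _)
    (g := fun t => (deriv h (γ t) / h (γ t)) * deriv γ t) (φ := fun t => h (γ t))
    ((integrand_continuous hΩo (logderiv_contOn hΩo hh hne) hγ).continuousOn)
    ?_
  · have hkey2 : h (γ 1) = h (γ 0) * Complex.exp (pint h γ) := hkey
    rwa [hγ.one, hγ.zero] at hkey2
  · intro t _
    have hhd : HasDerivAt h (deriv h (γ t)) (γ t) :=
      (hh.differentiableAt (hΩo.mem_nhds (hγ.2.1 t))).hasDerivAt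
    have hγd : HasDerivAt γ (deriv γ t) t :=
      ((hγ.1.differentiable one_ne_zero) t).hasDerivAt
    have hcomp := HasDerivAt.scomp_of_eq (x := t) (hg := hhd) (hh := hγd) (hy := rfl)
    have heq : deriv γ t • deriv h (γ t)
        = (deriv h (γ t) / h (γ t)) * deriv γ t * h (γ t) := by
      rw [smul_eq_mul]
      field_simp [hne _ (hγ.2.1 t)]
    rw [heq] at hcomp
    exact hcomp

/-- Monodromy for the square root `s` along a tame path in `P`. -/
theorem exp_pint_sqrt {P : Set ℂ} (hPo : IsOpen P) {h s : ℂ → ℂ}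
    (hs : DifferentiableOn ℂ s P) (hsne : ∀ z ∈ P, s z ≠ 0)
    (hsq : ∀ z ∈ P, s z ^ 2 = h z)
    (hf : ContinuousOn (fun z => deriv h z / h z) P)
    {γ : ℝ → ℂ} {a b : ℂ} (hγ : Tame P γ a b) :
    s b = s a * Complex.exp (pint h γ * (2:ℂ)⁻¹) := by
  have hd : ∀ z ∈ P, deriv h z = 2 * s z * deriv s z := by
    intro z hz
    have hds : HasDerivAt s (deriv s z) z :=
      (hs.differentiableAt (hPo.mem_nhds hz)).hasDerivAt
    have h2 : HasDerivAt (fun w => s w ^ 2) (2 * s z * deriv s z) z := by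
      have := hds.fun_pow 2
      simpa [pow_one] using this
    have hev : h =ᶠ[nhds z] fun w => s w ^ 2 := by
      filter_upwards [hPo.mem_nhds hz] with w hw
      exact (hsq w hw).symm
    exact (h2.congr_of_eventuallyEq hev).deriv
  have hkey := keyODE (U := Set.univ) isOpen_univ (Set.subset_univ _)
    (g := fun t => (deriv h (γ t) / h (γ t)) * deriv γ t * (2:ℂ)⁻¹)
    (φ := fun t => s (γ t))
    (((integrand_continuous hPo hf hγ).mul continuous_const).continuousOn)
    ?_
  · have hkey2 : s (γ 1) = s (γ 0) * Complex.exp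
        (∫ u in (0:ℝ)..1, (deriv h (γ u) / h (γ u)) * deriv γ u * (2:ℂ)⁻¹) := hkey
    rw [hγ.one, hγ.zero, intervalIntegral.integral_mul_const] at hkey2
    exact hkey2
  · intro t _
    have hzP := hγ.2.1 t
    have hsd : HasDerivAt s (deriv s (γ t)) (γ t) :=
      (hs.differentiableAt (hPo.mem_nhds hzP)).hasDerivAt
    have hγd : HasDerivAt γ (deriv γ t) t :=
      ((hγ.1.differentiable one_ne_zero) t).hasDerivAt
    have hcomp := HasDerivAt.scomp_of_eq (x := t) (hg := hsd) (hh := hγd) (hy := rfl)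
    have heq : deriv γ t • deriv s (γ t)
        = (deriv h (γ t) / h (γ t)) * deriv γ t * (2:ℂ)⁻¹ * s (γ t) := by
      rw [smul_eq_mul, hd _ hzP, ← hsq _ hzP]
      field_simp [hsne _ hzP]
    rw [heq] at hcomp
    exact hcomp

/-- Local logarithm of `h` near any point of `Ω`. -/
theorem local_log {Ω : Set ℂ} (hΩo : IsOpen Ω) {h : ℂ → ℂ}
    (hh : DifferentiableOn ℂ h Ω) (hne : ∀ z ∈ Ω, h z ≠ 0)
    {z₀ : ℂ} (hz₀ : z₀ ∈ Ω) :
    ∃ r > (0:ℝ), Metric.ball z₀ r ⊆ Ω ∧ ∃ g : ℂ → ℂ,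
      (∀ z ∈ Metric.ball z₀ r, HasDerivAt g (deriv h z / h z) z) ∧
      (∀ z ∈ Metric.ball z₀ r, Complex.exp (g z) = h z) := by
  have hca : ContinuousAt h z₀ := (hh.differentiableAt (hΩo.mem_nhds hz₀)).continuousAt
  have hw₀ : h z₀ ≠ 0 := hne _ hz₀
  have habs₀ : (0:ℝ) < ‖h z₀‖ := by
    simpa [norm_pos_iff] using hw₀
  have hballm : Metric.ball (h z₀) (‖h z₀‖) ∈ nhds (h z₀) :=
    Metric.ball_mem_nhds _ habs₀
  have hmem : Ω ∩ h ⁻¹' Metric.ball (h z₀) (‖h z₀‖) ∈ nhds z₀ :=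
    Filter.inter_mem (hΩo.mem_nhds hz₀) (hca.preimage_mem_nhds hballm)
  obtain ⟨r, hr, hrsub⟩ := Metric.mem_nhds_iff.mp hmem
  refine ⟨r, hr, fun z hz => (hrsub hz).1,
    fun z => Complex.log (h z / h z₀) + Complex.log (h z₀), ?_, ?_⟩
  · intro z hz
    obtain ⟨hzΩ, hzb⟩ := hrsub hz
    have hzne : h z ≠ 0 := hne _ hzΩ
    have habs : ‖h z / h z₀ - 1‖ < 1 := by
      have hdist : ‖h z - h z₀‖ < ‖h z₀‖ := by
        have h5 : dist (h z) (h z₀) < ‖h z₀‖ := Metric.mem_ball.mp hzb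
        rwa [Complex.dist_eq] at h5
      have he : h z / h z₀ - 1 = (h z - h z₀) / h z₀ := by
        field_simp
      rw [he, norm_div]
      exact (div_lt_one habs₀).mpr hdist
    have hslit : h z / h z₀ ∈ Complex.slitPlane := by
      refine Complex.mem_slitPlane_iff.mpr (Or.inl ?_)
      have h2 : |(h z / h z₀ - 1).re| ≤ ‖h z / h z₀ - 1‖ :=
        Complex.abs_re_le_norm _
      have h3 : (h z / h z₀ - 1).re = (h z / h z₀).re - 1 := by
        simp [Complex.sub_re]
      have h4 := (abs_lt.mp (lt_of_le_of_lt h2 habs)).1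
      rw [h3] at h4
      linarith
    have hhd : HasDerivAt h (deriv h z) z :=
      (hh.differentiableAt (hΩo.mem_nhds hzΩ)).hasDerivAt
    have hdiv : HasDerivAt (fun w => h w / h z₀) (deriv h z / h z₀) z :=
      hhd.div_const _
    have hlog := (hdiv.clog hslit).add_const (Complex.log (h z₀))
    have heq : deriv h z / h z₀ / (h z / h z₀) = deriv h z / h z := by
      rw [div_div_div_cancel_right₀]
      exact hw₀
    rwa [heq] at hlog
  · intro z hz
    obtain ⟨hzΩ, hzb⟩ := hrsub hz
    have hzne : h z ≠ 0 := hne _ hzΩ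
    rw [Complex.exp_add, Complex.exp_log (div_ne_zero hzne hw₀), Complex.exp_log hw₀,
      div_mul_cancel₀ _ hw₀]

end SqrtExt5

open SqrtExt SqrtExt2 SqrtExt3 SqrtExt4 SqrtExt5

/-- Let `P ⊆ Ω ⊆ ℂ` be path-connected open sets, `h : Ω → ℂ \ {0}` analytic and
nowhere vanishing, and `s : P → ℂ \ {0}` analytic with `s² = h` on `P`. Then `s`
extends to an analytic square root of `h` on all of `Ω` if and only if for every
smooth closed curve `γ` in `Ω`, `(1/(2πi)) ∮_γ h'(z)/h(z) dz` is an even integer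
(stated in the form `∮_γ h'/h = 2πi · 2n`). -/
theorem analytic_sqrt_extension_iff (Ω P : Set ℂ) (hPΩ : P ⊆ Ω)
    (hΩo : IsOpen Ω) (hΩc : IsPathConnected Ω)
    (hPo : IsOpen P) (hPc : IsPathConnected P)
    (h s : ℂ → ℂ) (hh : DifferentiableOn ℂ h Ω) (hne : ∀ z ∈ Ω, h z ≠ 0)
    (hs : DifferentiableOn ℂ s P) (hsne : ∀ z ∈ P, s z ≠ 0)
    (hsq : ∀ z ∈ P, s z ^ 2 = h z) :
    (∃ S : ℂ → ℂ, DifferentiableOn ℂ S Ω ∧ (∀ z ∈ P, S z = s z) ∧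
        ∀ z ∈ Ω, S z ^ 2 = h z) ↔
    (∀ γ : ℝ → ℂ, ContDiff ℝ 1 γ → (∀ u ∈ Set.Icc (0 : ℝ) 1, γ u ∈ Ω) → γ 0 = γ 1 →
      ∃ n : ℤ, (∫ u in (0:ℝ)..1, (deriv h (γ u) / h (γ u)) * deriv γ u) =
        2 * Real.pi * Complex.I * (2 * n)) := by
  classical
  constructor
  · -- Forward direction
    rintro ⟨S, hS, hSP, hSsq⟩ γ hγ hγΩ hγc
    have hSne : ∀ z ∈ Ω, S z ≠ 0 := by
      intro z hz hz0
      exact hne z hz (by rw [← hSsq z hz, hz0]; ring)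
    have hd : ∀ z ∈ Ω, deriv h z = 2 * S z * deriv S z := by
      intro z hz
      have hds : HasDerivAt S (deriv S z) z :=
        (hS.differentiableAt (hΩo.mem_nhds hz)).hasDerivAt
      have h2 : HasDerivAt (fun w => S w ^ 2) (2 * S z * deriv S z) z := by
        simpa [pow_one] using hds.fun_pow 2
      have hev : h =ᶠ[nhds z] fun w => S w ^ 2 := by
        filter_upwards [hΩo.mem_nhds hz] with w hw
        exact (hSsq w hw).symm
      exact (h2.congr_of_eventuallyEq hev).deriv
    set U : Set ℝ := γ ⁻¹' Ω with hUdef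
    have hUo : IsOpen U := hΩo.preimage hγ.continuous
    have hsubU : Set.Icc (0:ℝ) 1 ⊆ U := fun u hu => hγΩ u hu
    have hfc : ContinuousOn (fun z => deriv S z / S z) Ω := logderiv_contOn hΩo hS hSne
    set g : ℝ → ℂ := fun t => (deriv S (γ t) / S (γ t)) * deriv γ t with hgdef
    have hgc : ContinuousOn g U := by
      refine ContinuousOn.mul ?_ (hγ.continuous_deriv le_rfl).continuousOn
      exact hfc.comp hγ.continuous.continuousOn (fun u hu => hu)
    have hφ : ∀ t ∈ Set.Icc (0:ℝ) 1, HasDerivAt (fun t => S (γ t)) (g t * S (γ t)) t := by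
      intro t ht
      have hzΩ : γ t ∈ Ω := hγΩ t ht
      have hSd : HasDerivAt S (deriv S (γ t)) (γ t) :=
        (hS.differentiableAt (hΩo.mem_nhds hzΩ)).hasDerivAt
      have hγd : HasDerivAt γ (deriv γ t) t := ((hγ.differentiable one_ne_zero) t).hasDerivAt
      have hcomp := HasDerivAt.scomp_of_eq (x := t) (hg := hSd) (hh := hγd) (hy := rfl)
      have heq : deriv γ t • deriv S (γ t) = g t * S (γ t) := by
        rw [smul_eq_mul, hgdef]
        field_simp [hSne _ hzΩ]
      rw [heq] at hcomp
      exact hcomp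
    have hmain : S (γ 1) = S (γ 0) * Complex.exp (∫ u in (0:ℝ)..1, g u) :=
      keyODE hUo hsubU hgc hφ
    rw [← hγc] at hmain
    have hS0 : S (γ 0) ≠ 0 := hSne _ (hγΩ 0 (by norm_num))
    have hexp1 : Complex.exp (∫ u in (0:ℝ)..1, g u) = 1 := by
      have := mul_left_cancel₀ hS0 (by rw [← hmain, mul_one] :
        S (γ 0) * 1 = S (γ 0) * Complex.exp (∫ u in (0:ℝ)..1, g u))
      exact this.symm
    obtain ⟨n, hn⟩ := Complex.exp_eq_one_iff.mp hexp1
    refine ⟨n, ?_⟩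
    have hcong : Set.EqOn (fun u => (deriv h (γ u) / h (γ u)) * deriv γ u)
        (fun u => 2 * g u) (Set.uIcc (0:ℝ) 1) := by
      intro u hu
      rw [Set.uIcc_of_le zero_le_one] at hu
      have hzΩ : γ u ∈ Ω := hγΩ u hu
      simp only [hgdef]
      rw [hd _ hzΩ, ← hSsq _ hzΩ]
      field_simp [hSne _ hzΩ]
    rw [intervalIntegral.integral_congr hcong, intervalIntegral.integral_const_mul, hn]
    push_cast
    ring
  · -- Backward direction
    intro hyp
    obtain ⟨x₀, hx₀P, -⟩ := id hPc
    have hx₀Ω : x₀ ∈ Ω := hPΩ hx₀P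
    have hfC : ContinuousOn (fun z => deriv h z / h z) Ω := logderiv_contOn hΩo hh hne
    have hex : ∀ z : ℂ, ∃ γ : ℝ → ℂ, z ∈ Ω → Tame Ω γ x₀ z := by
      intro z
      by_cases hz : z ∈ Ω
      · obtain ⟨γ, hγ⟩ := tame_exists hΩo hΩc hx₀Ω hz
        exact ⟨γ, fun _ => hγ⟩
      · exact ⟨fun _ => x₀, fun hcon => absurd hcon hz⟩
    choose Γ hΓ using hex
    set S : ℂ → ℂ := fun z => s x₀ * Complex.exp (pint h (Γ z) * (2:ℂ)⁻¹) with hSdef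
    have hloop : ∀ γ : ℝ → ℂ, Tame Ω γ x₀ x₀ →
        ∃ n : ℤ, pint h γ = 2 * Real.pi * Complex.I * (2 * n) := by
      intro γ hγ
      exact hyp γ hγ.1 (fun u _ => hγ.2.1 u) (by rw [hγ.zero, hγ.one])
    have indep : ∀ (z : ℂ) (γ : ℝ → ℂ), Tame Ω γ x₀ z →
        Complex.exp (pint h γ * (2:ℂ)⁻¹) = Complex.exp (pint h (Γ z) * (2:ℂ)⁻¹) := by
      intro z γ hγ
      have hzΩ : z ∈ Ω := by rw [← hγ.one]; exact hγ.2.1 1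
      have hΓz := hΓ z hzΩ
      obtain ⟨n, hn⟩ := hloop (cc γ (fun u => Γ z (1 - u))) (cc_tame hγ (rev_tame hΓz))
      have hval : pint h (cc γ (fun u => Γ z (1 - u))) = pint h γ - pint h (Γ z) := by
        rw [pint_cc hΩo hfC hγ (rev_tame hΓz), pint_rev hΩo hfC hΓz]
        ring
      have hγval : pint h γ = pint h (Γ z) + 2 * Real.pi * Complex.I * (2 * n) := by
        rw [← hn, hval]; ring
      rw [hγval, show (pint h (Γ z) + 2 * Real.pi * Complex.I * (2 * n)) * (2:ℂ)⁻¹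
          = pint h (Γ z) * (2:ℂ)⁻¹ + n * (2 * Real.pi * Complex.I) by push_cast; ring,
        Complex.exp_add, Complex.exp_int_mul_two_pi_mul_I, mul_one]
    have hsq' : ∀ z ∈ Ω, S z ^ 2 = h z := by
      intro z hz
      have hmono := exp_pint hΩo hh hne (hΓ z hz)
      have hSzsq : S z ^ 2 = s x₀ ^ 2 * Complex.exp (pint h (Γ z)) := by
        rw [hSdef]
        simp only []
        rw [mul_pow, sq (Complex.exp _), ← Complex.exp_add]
        congr 2
        ring
      rw [hSzsq, hsq x₀ hx₀P]
      exact hmono.symm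
    have hagree : ∀ z ∈ P, S z = s z := by
      intro z hz
      obtain ⟨γ, hγ⟩ := tame_exists hPo hPc hx₀P hz
      have hsmono := exp_pint_sqrt hPo hs hsne hsq (hfC.mono hPΩ) hγ
      rw [indep z γ (hγ.mono hPΩ)] at hsmono
      exact hsmono.symm
    have hdiff : DifferentiableOn ℂ S Ω := by
      intro z₀ hz₀
      obtain ⟨r, hr, hball, g, hgd, hge⟩ := local_log hΩo hh hne hz₀
      have hloc : ∀ z ∈ Metric.ball z₀ r,
          S z = S z₀ * Complex.exp ((g z - g z₀) * (2:ℂ)⁻¹) := by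
        intro z hz
        have hz₀b : z₀ ∈ Metric.ball z₀ r := Metric.mem_ball_self hr
        have hsegsub : segment ℝ z₀ z ⊆ Metric.ball z₀ r :=
          (convex_ball _ _).segment_subset hz₀b hz
        have hσ : Tame (Metric.ball z₀ r) (seg z₀ z) z₀ z := seg_tame hsegsub
        have hσΩ : Tame Ω (seg z₀ z) z₀ z := hσ.mono hball
        have hseg_int : pint h (seg z₀ z) = g z - g z₀ := by
          have hFTC := intervalIntegral.integral_eq_sub_of_hasDerivAt (a := (0:ℝ)) (b := (1:ℝ))
            (f := fun u => g (seg z₀ z u))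
            (f' := fun u => (deriv h (seg z₀ z u) / h (seg z₀ z u)) * deriv (seg z₀ z) u)
            ?_ ?_
          · rw [pint, hFTC, hσ.one, hσ.zero]
          · intro t _
            have hmem : seg z₀ z t ∈ Metric.ball z₀ r := hσ.2.1 t
            have hσd : HasDerivAt (seg z₀ z) (deriv (seg z₀ z) t) t :=
              (((seg_contDiff z₀ z).differentiable one_ne_zero) t).hasDerivAt
            have hcomp := HasDerivAt.scomp_of_eq (x := t) (hg := hgd _ hmem)
              (hh := hσd) (hy := rfl)
            have heq : deriv (seg z₀ z) t • (deriv h (seg z₀ z t) / h (seg z₀ z t))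
                = (deriv h (seg z₀ z t) / h (seg z₀ z t)) * deriv (seg z₀ z) t := by
              rw [smul_eq_mul]; ring
            rw [heq] at hcomp
            exact hcomp
          · exact (integrand_continuous hΩo hfC hσΩ).intervalIntegrable 0 1
        have hccT : Tame Ω (cc (Γ z₀) (seg z₀ z)) x₀ z := cc_tame (hΓ z₀ hz₀) hσΩ
        have h1 : S z = s x₀ * Complex.exp (pint h (cc (Γ z₀) (seg z₀ z)) * (2:ℂ)⁻¹) := by
          rw [hSdef]
          simp only []
          rw [indep z _ hccT]
        rw [h1, pint_cc hΩo hfC (hΓ z₀ hz₀) hσΩ, hseg_int, hSdef]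
        simp only []
        rw [mul_assoc, ← Complex.exp_add]
        congr 2
        ring
      have hev : S =ᶠ[nhds z₀] fun z => S z₀ * Complex.exp ((g z - g z₀) * (2:ℂ)⁻¹) := by
        filter_upwards [Metric.ball_mem_nhds z₀ hr] with z hz using hloc z hz
      have hdiff0 : DifferentiableAt ℂ
          (fun z => S z₀ * Complex.exp ((g z - g z₀) * (2:ℂ)⁻¹)) z₀ := by
        have hgd0 : DifferentiableAt ℂ g z₀ := (hgd z₀ (Metric.mem_ball_self hr)).differentiableAt
        exact (((hgd0.sub_const _).mul_const _).cexp).const_mul _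
      exact (hev.differentiableAt_iff.mpr hdiff0).differentiableWithinAt
    exact ⟨S, hdiff, hagree, hsq'⟩
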